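/- Let (X_p)_{p prime} be the independent random variables where X_p is 1 with probability p/(2(p+1)), 0 with probability 1/(p+1), and -1 with probability p/(2(p+1)), and let L(1,X) = ∏_p (1 - X_p/p)^{-1}. Then E[L(1,X)^{-2}] = ζ(2)/ζ(3). -/

import Mathlib

open Filter MeasureTheory ProbabilityTheory

lemma aux_indep_prod {Ω : Type*} [MeasurableSpace Ω] {μ : Measure Ω} [IsProbabilityMeasure μ]
    {ι : Type*} (g : ι → Ω → ℝ)
    (hindep : iIndepFun g μ)
    (hgmeas : ∀ i, Measurable (g i)) (hint : ∀ i, Integrable (g i) μ) (s : Finset ι) :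
    Integrable (fun ω => ∏ i ∈ s, g i ω) μ ∧
      (∫ ω, ∏ i ∈ s, g i ω ∂μ) = ∏ i ∈ s, ∫ ω, g i ω ∂μ := by
  classical
  induction s using Finset.induction_on with
  | empty => simp
  | @insert a s ha ih =>
    have hip : IndepFun (g a) (∏ j ∈ s, g j) μ :=
      (hindep.indepFun_finset_prod_of_notMem hgmeas ha).symm
    have hfn : (∏ j ∈ s, g j) = fun ω => ∏ j ∈ s, g j ω := by
      funext ω; exact Finset.prod_apply ω s g
    have hps : Integrable (∏ j ∈ s, g j) μ := by rw [hfn]; exact ih.1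
    have hmul : Integrable (g a * ∏ j ∈ s, g j) μ := hip.integrable_mul (hint a) hps
    have hins : (fun ω => ∏ i ∈ insert a s, g i ω) = g a * ∏ j ∈ s, g j := by
      funext ω; rw [Finset.prod_insert ha]; simp [hfn]
    constructor
    · rw [hins]; exact hmul
    · rw [hins, Finset.prod_insert ha]
      have := hip.integral_mul_eq_mul_integral (hint a).aestronglyMeasurable hps.aestronglyMeasurable
      rw [this]
      congr 1
      rw [hfn]
      exact ih.2

lemma prod_dite_eq_prod_subtype {M : Type*} [CommMonoid M] (s : Finset ℕ) (F : {p : ℕ // p.Prime} → M) :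
    (∏ p ∈ s, if hp : p.Prime then F ⟨p, hp⟩ else 1)
      = ∏ q ∈ s.subtype Nat.Prime, F q := by
  classical
  have h1 : ∀ q : {p : ℕ // p.Prime},
      F q = if hp : (q : ℕ).Prime then F ⟨(q : ℕ), hp⟩ else 1 := by
    intro q; rw [dif_pos q.2]
  calc (∏ p ∈ s, if hp : p.Prime then F ⟨p, hp⟩ else 1)
      = ∏ p ∈ s.filter Nat.Prime, if hp : p.Prime then F ⟨p, hp⟩ else 1 := by
        rw [Finset.prod_filter_of_ne]
        intro x _ hx
        by_contra hpx
        exact hx (dif_neg hpx)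
    _ = ∏ q ∈ s.subtype Nat.Prime, if hp : (q : ℕ).Prime then F ⟨(q : ℕ), hp⟩ else 1 :=
        (Finset.prod_subtype_eq_prod_filter _).symm
    _ = ∏ q ∈ s.subtype Nat.Prime, F q := Finset.prod_congr rfl fun q _ => (h1 q).symm

/-- With `(X_p)_{p prime}` independent, `X_p = 1` with probability
`p/(2(p+1))`, `0` with probability `1/(p+1)` and `-1` with probability
`p/(2(p+1))`, and `L(1,X) = ∏_p (1 - X_p/p)⁻¹` (the a.s. limit of the partial
products), one has `E[L(1,X)^{-2}] = ζ(2)/ζ(3)`. -/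
theorem expectation_random_euler_product_neg_two
    {Ω : Type*} [MeasurableSpace Ω] (μ : Measure Ω) [IsProbabilityMeasure μ]
    (X : {p : ℕ // p.Prime} → Ω → ℝ)
    (hmeas : ∀ p, Measurable (X p))
    (hindep : iIndepFun X μ)
    (h1 : ∀ p : {p : ℕ // p.Prime},
      μ {ω | X p ω = 1} = ENNReal.ofReal ((p : ℕ) / (2 * ((p : ℕ) + 1)) : ℝ))
    (h0 : ∀ p : {p : ℕ // p.Prime},
      μ {ω | X p ω = 0} = ENNReal.ofReal (1 / ((p : ℕ) + 1) : ℝ))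
    (hm1 : ∀ p : {p : ℕ // p.Prime},
      μ {ω | X p ω = -1} = ENNReal.ofReal ((p : ℕ) / (2 * ((p : ℕ) + 1)) : ℝ))
    (L : Ω → ℝ) (hL : Measurable L)
    (hlim : ∀ᵐ ω ∂μ, Tendsto (fun n : ℕ => ∏ p ∈ Finset.range n,
        if hp : p.Prime then (1 - X ⟨p, hp⟩ ω / p)⁻¹ else 1)
      atTop (nhds (L ω))) :
    ((∫ ω, (L ω) ^ (-2 : ℤ) ∂μ : ℝ) : ℂ) = riemannZeta 2 / riemannZeta 3 := by
  classical
  have hq2 : ∀ p : {p : ℕ // p.Prime}, (2:ℝ) ≤ ((p:ℕ):ℝ) := fun p => by exact_mod_cast p.2.two_le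
  have hqpos : ∀ p : {p : ℕ // p.Prime}, (0:ℝ) < ((p:ℕ):ℝ) := fun p => lt_of_lt_of_le two_pos (hq2 p)
  have hS : ∀ (p : {p : ℕ // p.Prime}) (r : ℝ), MeasurableSet {ω | X p ω = r} :=
    fun p r => hmeas p (measurableSet_singleton r)
  have hae : ∀ p : {p : ℕ // p.Prime}, ∀ᵐ ω ∂μ, X p ω = 1 ∨ X p ω = 0 ∨ X p ω = -1 := by
    intro p
    have hd10 : Disjoint {ω | X p ω = 1} {ω | X p ω = 0} := by
      rw [Set.disjoint_left]; rintro ω ha hb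
      simp only [Set.mem_setOf_eq] at ha hb
      exact one_ne_zero (ha ▸ hb)
    have hd : Disjoint ({ω | X p ω = 1} ∪ {ω | X p ω = 0}) {ω | X p ω = -1} := by
      rw [Set.disjoint_left]; rintro ω (ha | ha) hb <;>
        simp only [Set.mem_setOf_eq] at ha hb <;> rw [ha] at hb <;> norm_num at hb
    have hsum : (((p:ℕ):ℝ) / (2 * (((p:ℕ):ℝ) + 1)) + 1 / (((p:ℕ):ℝ) + 1)
        + ((p:ℕ):ℝ) / (2 * (((p:ℕ):ℝ) + 1))) = 1 := by
      have h1p : ((p:ℕ):ℝ) + 1 ≠ 0 := by positivity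
      field_simp
      ring
    have hU : μ ({ω | X p ω = 1} ∪ {ω | X p ω = 0} ∪ {ω | X p ω = -1}) = 1 := by
      rw [measure_union hd (hS p (-1)), measure_union hd10 (hS p 0), h1 p, h0 p, hm1 p,
        ← ENNReal.ofReal_add (by positivity) (by positivity),
        ← ENNReal.ofReal_add (by positivity) (by positivity), hsum, ENNReal.ofReal_one]
    have hcompl := (prob_compl_eq_zero_iff (((hS p 1).union (hS p 0)).union (hS p (-1)))).2 hU
    rw [ae_iff]
    have hset : {ω | ¬(X p ω = 1 ∨ X p ω = 0 ∨ X p ω = -1)}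
        = ({ω | X p ω = 1} ∪ {ω | X p ω = 0} ∪ {ω | X p ω = -1})ᶜ := by
      ext ω; simp [Set.mem_union, or_assoc]; tauto
    rw [hset]; exact hcompl
  have hbase : ∀ (p : {p : ℕ // p.Prime}) (ψ : ℝ → ℝ), Measurable ψ →
      ∫ ω, ψ (X p ω) ∂μ =
        (ψ 1 + ψ (-1)) * (((p:ℕ):ℝ) / (2 * (((p:ℕ):ℝ) + 1))) + ψ 0 * (1 / (((p:ℕ):ℝ) + 1)) := by
    intro p ψ hψ
    have heq : (fun ω => ψ (X p ω)) =ᵐ[μ]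
        fun ω => ({ω | X p ω = 1}.indicator (fun _ => ψ 1) ω
          + {ω | X p ω = 0}.indicator (fun _ => ψ 0) ω
          + {ω | X p ω = -1}.indicator (fun _ => ψ (-1)) ω) := by
      filter_upwards [hae p] with ω hω
      rcases hω with h | h | h <;>
        norm_num [Set.indicator_apply, Set.mem_setOf_eq, h]
    have i1 : Integrable ({ω | X p ω = 1}.indicator (fun _ => ψ 1)) μ :=
      (integrable_const _).indicator (hS p 1)
    have i0 : Integrable ({ω | X p ω = 0}.indicator (fun _ => ψ 0)) μ :=
      (integrable_const _).indicator (hS p 0)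
    have im : Integrable ({ω | X p ω = -1}.indicator (fun _ => ψ (-1))) μ :=
      (integrable_const _).indicator (hS p (-1))
    have ha : (0:ℝ) ≤ ((p:ℕ):ℝ) / (2 * (((p:ℕ):ℝ) + 1)) := by positivity
    have hb : (0:ℝ) ≤ 1 / (((p:ℕ):ℝ) + 1) := by positivity
    have iadd : Integrable (fun a => {ω | X p ω = 1}.indicator (fun _ => ψ 1) a
        + {ω | X p ω = 0}.indicator (fun _ => ψ 0) a) μ := by exact i1.add i0
    rw [integral_congr_ae heq, integral_add iadd im, integral_add i1 i0,
      integral_indicator_const _ (hS p 1), integral_indicator_const _ (hS p 0),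
      integral_indicator_const _ (hS p (-1)), measureReal_def, measureReal_def, measureReal_def, h1 p, h0 p, hm1 p,
      ENNReal.toReal_ofReal ha, ENNReal.toReal_ofReal hb, smul_eq_mul, smul_eq_mul, smul_eq_mul]
    ring
  have hEpow : ∀ (p : {p : ℕ // p.Prime}) (k : ℕ), k ≤ 2 →
      ∫ ω, (1 - X p ω / ((p:ℕ):ℝ))^k ∂μ =
        if k = 2 then (((p:ℕ):ℝ)^2 + ((p:ℕ):ℝ) + 1)/(((p:ℕ):ℝ) * (((p:ℕ):ℝ)+1)) else 1 := by
    intro p k hk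
    have hq0 : ((p:ℕ):ℝ) ≠ 0 := ne_of_gt (hqpos p)
    have hq1 : ((p:ℕ):ℝ) + 1 ≠ 0 := by positivity
    interval_cases k
    · simp
    · have h := hbase p (fun x => (1 - x / ((p:ℕ):ℝ))^1) (by fun_prop)
      rw [h]
      norm_num
      field_simp
      ring
    · have h := hbase p (fun x => (1 - x / ((p:ℕ):ℝ))^2) (by fun_prop)
      rw [h]
      norm_num
      field_simp
      ring
  -- pointwise facts about the values of the factors
  have hgmeas : ∀ p : {p : ℕ // p.Prime}, Measurable (fun ω => 1 - X p ω / ((p:ℕ):ℝ)) :=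
    fun p => (measurable_const.sub ((hmeas p).div_const _))
  have habs' : ∀ (p : {p : ℕ // p.Prime}) (ω : Ω), (X p ω = 1 ∨ X p ω = 0 ∨ X p ω = -1) →
      |1 - X p ω / ((p:ℕ):ℝ)| ≤ 2 := by
    intro p ω h
    have h2 := hq2 p
    have hp0 := hqpos p
    have hd0 : (0:ℝ) ≤ 1 / ((p:ℕ):ℝ) := by positivity
    have hd1 : 1 / ((p:ℕ):ℝ) ≤ 1 := by
      rw [div_le_one hp0]; linarith
    have hneg : (-1:ℝ) / ((p:ℕ):ℝ) = -(1 / ((p:ℕ):ℝ)) := by ring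
    rcases h with h | h | h
    · rw [h, abs_le]; constructor <;> linarith
    · rw [h, abs_le]; norm_num
    · rw [h, abs_le, hneg]; constructor <;> linarith
  have hpowint : ∀ (p : {p : ℕ // p.Prime}) (k : ℕ),
      Integrable (fun ω => (1 - X p ω / ((p:ℕ):ℝ))^k) μ := by
    intro p k
    refine memLp_one_iff_integrable.mp
      (MemLp.of_bound ((hgmeas p).pow_const k).aestronglyMeasurable (2^k) ?_)
    filter_upwards [hae p] with ω h
    rw [Real.norm_eq_abs, abs_pow]
    exact pow_le_pow_left₀ (abs_nonneg _) (habs' p ω h) k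
  -- the moment computation
  set c : ℕ → ℝ := fun p => ((p:ℝ)^2 + (p:ℝ) + 1)/((p:ℝ) * ((p:ℝ)+1)) with hc
  set Y : ℕ → Ω → ℝ := fun n ω => ∏ p ∈ Finset.range n,
    if hp : p.Prime then 1 - X ⟨p, hp⟩ ω / (p:ℝ) else 1 with hYdef
  set piN : ℕ → ℝ := fun n => ∏ p ∈ n.primesBelow, c p with hpiNdef
  have hmoment : ∀ n m : ℕ, n ≤ m →
      Integrable (fun ω => Y n ω * Y m ω) μ ∧ (∫ ω, Y n ω * Y m ω ∂μ) = piN n := by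
    intro n m hnm
    set k : {p : ℕ // p.Prime} → ℕ :=
      fun q => (if (q:ℕ) < n then 1 else 0) + (if (q:ℕ) < m then 1 else 0) with hk
    set G : {p : ℕ // p.Prime} → Ω → ℝ := fun q ω => (1 - X q ω / ((q:ℕ):ℝ))^(k q) with hG
    have hGindep : iIndepFun G μ := by
      exact hindep.comp (fun q (x:ℝ) => (1 - x / ((q:ℕ):ℝ))^(k q))
        (fun q => (measurable_const.sub ((measurable_id.div_const _))).pow_const _)
    have hGmeas : ∀ q, Measurable (G q) := fun q => ((hgmeas q).pow_const _)
    have hGint : ∀ q, Integrable (G q) μ := fun q => hpowint q (k q)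
    obtain ⟨hI, hEq⟩ := aux_indep_prod G hGindep hGmeas hGint ((Finset.range m).subtype Nat.Prime)
    have hsub : (Finset.range n).subtype Nat.Prime ⊆ (Finset.range m).subtype Nat.Prime :=
      Finset.subtype_mono (Finset.range_subset_range.2 hnm)
    have hprod_eq : ∀ ω, Y n ω * Y m ω = ∏ q ∈ (Finset.range m).subtype Nat.Prime, G q ω := by
      intro ω
      have hYm : Y m ω = ∏ q ∈ (Finset.range m).subtype Nat.Prime,
          (1 - X q ω / ((q:ℕ):ℝ)) := by
        rw [hYdef]
        exact prod_dite_eq_prod_subtype (Finset.range m) (fun q => 1 - X q ω / ((q:ℕ):ℝ))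
      have hYn : Y n ω = ∏ q ∈ (Finset.range m).subtype Nat.Prime,
          (1 - X q ω / ((q:ℕ):ℝ))^(if (q:ℕ) < n then 1 else 0) := by
        rw [hYdef]
        exact (prod_dite_eq_prod_subtype (Finset.range n)
            (fun q => 1 - X q ω / ((q:ℕ):ℝ))).trans
          (((Finset.prod_congr rfl (fun q hq => by
              rw [if_pos (Finset.mem_range.1 (Finset.mem_subtype.1 hq)), pow_one])).symm).trans
           (Finset.prod_subset hsub (fun q _ hq' => by
              rw [if_neg, pow_zero]
              intro hlt
              exact hq' (Finset.mem_subtype.2 (Finset.mem_range.2 hlt)))))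
      rw [hYn, hYm, ← Finset.prod_mul_distrib]
      refine Finset.prod_congr rfl fun q hq => ?_
      have hqm : (q:ℕ) < m := Finset.mem_range.1 (Finset.mem_subtype.1 hq)
      rw [hG, hk]
      simp only [if_pos hqm]
      rw [pow_add, pow_one]
    constructor
    · refine hI.congr (Eventually.of_forall fun ω => ?_)
      exact (hprod_eq ω).symm
    · have hie : (fun ω => Y n ω * Y m ω) =ᵐ[μ]
          (fun ω => ∏ q ∈ (Finset.range m).subtype Nat.Prime, G q ω) :=
        Eventually.of_forall hprod_eq
      refine (integral_congr_ae hie).trans (hEq.trans ?_)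
      have hval : ∀ q ∈ (Finset.range m).subtype Nat.Prime,
          (∫ ω, G q ω ∂μ) = if (q:ℕ) < n then c (q:ℕ) else 1 := by
        intro q hq
        have hqm : (q:ℕ) < m := Finset.mem_range.1 (Finset.mem_subtype.1 hq)
        by_cases hlt : (q:ℕ) < n
        · have hk2 : k q = 2 := by rw [hk]; simp [hlt, hqm]
          rw [hG]
          simp only [hk2]
          rw [hEpow q 2 le_rfl, if_pos rfl, if_pos hlt, hc]
        · have hk1 : k q = 1 := by rw [hk]; simp [hlt, hqm]
          rw [hG]
          simp only [hk1]
          rw [hEpow q 1 (by norm_num), if_neg (by norm_num), if_neg hlt]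
      have hstep : ∏ q ∈ (Finset.range m).subtype Nat.Prime,
          (if (q:ℕ) < n then c (q:ℕ) else 1)
          = ∏ q ∈ (Finset.range n).subtype Nat.Prime, c (q:ℕ) := by
        rw [← Finset.prod_subset hsub (fun q _ hq' => if_neg (fun hlt =>
          hq' (Finset.mem_subtype.2 (Finset.mem_range.2 hlt))))]
        exact Finset.prod_congr rfl fun q hq =>
          if_pos (Finset.mem_range.1 (Finset.mem_subtype.1 hq))
      refine (Finset.prod_congr rfl hval).trans (hstep.trans ?_)
      refine (Finset.prod_subtype_eq_prod_filter c).trans ?_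
      rw [hpiNdef]
      exact Finset.prod_congr (by ext x; simp [Nat.primesBelow, Finset.mem_filter]) fun _ _ => rfl
  -- the Euler product side
  have h2re : (1:ℝ) < (2:ℂ).re := by norm_num
  have h3re : (1:ℝ) < (3:ℂ).re := by norm_num
  have hz3 : riemannZeta 3 ≠ 0 := riemannZeta_ne_zero_of_one_lt_re h3re
  have hAB : Tendsto (fun n : ℕ => ((piN n : ℝ) : ℂ)) atTop
      (nhds (riemannZeta 2 / riemannZeta 3)) := by
    have hA := riemannZeta_eulerProduct h2re
    have hB := riemannZeta_eulerProduct h3re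
    refine (hA.div hB hz3).congr fun n => ?_
    simp only [Pi.div_apply]
    rw [← Finset.prod_div_distrib]
    have hofp : ((piN n : ℝ) : ℂ) = ∏ p ∈ n.primesBelow, ((c p : ℝ) : ℂ) := by
      rw [hpiNdef]; push_cast; rfl
    rw [hofp]
    refine Finset.prod_congr rfl fun p hp => ?_
    have hpp : p.Prime := Nat.prime_of_mem_primesBelow hp
    have hp2 : 2 ≤ p := hpp.two_le
    have hz0 : ((p:ℂ)) ≠ 0 := by
      simp only [ne_eq, Nat.cast_eq_zero]; omega
    have hcpow2 : ((p:ℂ)) ^ (-(2:ℂ)) = (((p:ℂ))^(2:ℕ))⁻¹ := by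
      rw [Complex.cpow_neg]
      norm_num
    have hcpow3 : ((p:ℂ)) ^ (-(3:ℂ)) = (((p:ℂ))^(3:ℕ))⁻¹ := by
      rw [Complex.cpow_neg]
      norm_num
    have hne2 : ((p:ℂ))^(2:ℕ) - 1 ≠ 0 := by
      intro h
      have : ((p^2 : ℕ) : ℂ) = ((1:ℕ) : ℂ) := by push_cast; linear_combination h
      have h2 := Nat.cast_injective this
      have h4 : 2^2 ≤ p^2 := Nat.pow_le_pow_left hp2 2
      omega
    have hne3 : ((p:ℂ))^(3:ℕ) - 1 ≠ 0 := by
      intro h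
      have : ((p^3 : ℕ) : ℂ) = ((1:ℕ) : ℂ) := by push_cast; linear_combination h
      have h3 := Nat.cast_injective this
      have h8 : 2^3 ≤ p^3 := Nat.pow_le_pow_left hp2 3
      omega
    have hp1 : ((p:ℂ)) + 1 ≠ 0 := by
      intro h
      have : ((p + 1 : ℕ) : ℂ) = ((0:ℕ) : ℂ) := by push_cast; linear_combination h
      have := Nat.cast_injective this
      omega
    have hcc : ((c p : ℝ) : ℂ) = ((p:ℂ)^2 + (p:ℂ) + 1)/((p:ℂ) * ((p:ℂ)+1)) := by
      rw [hc]; push_cast; ring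
    rw [hcpow2, hcpow3, hcc]
    have h2z : (1 - ((p:ℂ)^(2:ℕ))⁻¹) ≠ 0 := by
      intro h
      apply hne2
      have hpow : ((p:ℂ))^(2:ℕ) ≠ 0 := pow_ne_zero _ hz0
      field_simp at h
      linear_combination h
    have h3z : (1 - ((p:ℂ)^(3:ℕ))⁻¹) ≠ 0 := by
      intro h
      apply hne3
      have hpow : ((p:ℂ))^(3:ℕ) ≠ 0 := pow_ne_zero _ hz0
      field_simp at h
      linear_combination h
    field_simp
    ring
  have hπ : Tendsto piN atTop (nhds ((riemannZeta 2 / riemannZeta 3).re)) := by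
    have := (Complex.continuous_re.tendsto _).comp hAB
    simpa [Function.comp_def] using this
  have him : (riemannZeta 2 / riemannZeta 3).im = 0 := by
    have h' := (Complex.continuous_im.tendsto _).comp hAB
    simp only [Function.comp_def, Complex.ofReal_im] at h'
    exact (tendsto_nhds_unique h' tendsto_const_nhds)
  have hrC : (((riemannZeta 2 / riemannZeta 3).re : ℝ) : ℂ) = riemannZeta 2 / riemannZeta 3 := by
    apply Complex.ext
    · simp
    · simp [him]
  -- L² theory
  haveI : Fact ((1:ENNReal) ≤ 2) := ⟨one_le_two⟩
  have hYmeas : ∀ n, Measurable (Y n) := by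
    intro n
    simp only [hYdef]
    apply Finset.measurable_prod
    intro p hp
    by_cases h : p.Prime
    · simpa only [dif_pos h] using hgmeas ⟨p, h⟩
    · simp only [dif_neg h]; exact measurable_const
  have haeAll : ∀ᵐ ω ∂μ, ∀ p : {p : ℕ // p.Prime}, X p ω = 1 ∨ X p ω = 0 ∨ X p ω = -1 :=
    ae_all_iff.2 hae
  have hYbound : ∀ n : ℕ, ∀ᵐ ω ∂μ, ‖Y n ω‖ ≤ 2^n := by
    intro n
    filter_upwards [haeAll] with ω hω
    simp only [hYdef, Real.norm_eq_abs]
    calc |∏ p ∈ Finset.range n, if hp : p.Prime then 1 - X ⟨p, hp⟩ ω / (p:ℝ) else 1|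
        = ∏ p ∈ Finset.range n, |if hp : p.Prime then 1 - X ⟨p, hp⟩ ω / (p:ℝ) else 1| :=
          Finset.abs_prod _ _
      _ ≤ ∏ _p ∈ Finset.range n, 2 := Finset.prod_le_prod (fun _ _ => abs_nonneg _)
          (fun p _ => by
            by_cases h : p.Prime
            · simpa only [dif_pos h] using habs' ⟨p, h⟩ ω (hω ⟨p, h⟩)
            · rw [dif_neg h]; norm_num)
      _ = 2^n := by rw [Finset.prod_const, Finset.card_range]
  have hYmem : ∀ n, MemLp (Y n) 2 μ := fun n =>
    MemLp.of_bound (hYmeas n).aestronglyMeasurable _ (hYbound n)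
  set η : ℕ → Lp ℝ 2 μ := fun n => (hYmem n).toLp (Y n) with hηdef
  have hinner : ∀ n m : ℕ, n ≤ m → (inner ℝ (η n) (η m) : ℝ) = piN n := by
    intro n m hnm
    rw [MeasureTheory.L2.inner_def]
    have heq2 : ∫ a, (inner ℝ (η n a) (η m a) : ℝ) ∂μ = ∫ a, Y n a * Y m a ∂μ := by
      refine integral_congr_ae ?_
      have g1 : ⇑(η n) =ᵐ[μ] Y n := by rw [hηdef]; exact MemLp.coeFn_toLp (hYmem n)
      have g2 : ⇑(η m) =ᵐ[μ] Y m := by rw [hηdef]; exact MemLp.coeFn_toLp (hYmem m)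
      filter_upwards [g1, g2] with a e1 e2
      rw [e1, e2]
      simp [RCLike.inner_apply]
      ring
    rw [heq2, (hmoment n m hnm).2]
  have hnormsq : ∀ n, ‖η n‖^2 = piN n := by
    intro n
    rw [← real_inner_self_eq_norm_sq]
    exact hinner n n le_rfl
  have hdist : ∀ n m : ℕ, n ≤ m → dist (η n) (η m)^2 = piN m - piN n := by
    intro n m hnm
    rw [dist_eq_norm, norm_sub_sq_real, hnormsq n, hnormsq m, hinner n m hnm]
    ring
  have hcauchy : CauchySeq η := by
    rw [Metric.cauchySeq_iff']
    intro ε hε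
    obtain ⟨N, hN⟩ := Metric.cauchySeq_iff'.1 hπ.cauchySeq (ε^2) (by positivity)
    refine ⟨N, fun n hn => ?_⟩
    have h2 : dist (η n) (η N)^2 = piN n - piN N := by
      rw [dist_comm]; exact hdist N n hn
    have h3 : piN n - piN N < ε^2 := by
      have := hN n hn
      rw [Real.dist_eq] at this
      exact lt_of_le_of_lt (le_abs_self _) this
    nlinarith [dist_nonneg (x := η n) (y := η N), hε]
  obtain ⟨Z, hZ⟩ := cauchySeq_tendsto_of_complete hcauchy
  have hZnorm : ‖Z‖^2 = (riemannZeta 2 / riemannZeta 3).re := by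
    have hn1 : Tendsto (fun n => ‖η n‖^2) atTop (nhds (‖Z‖^2)) :=
      ((continuous_norm.tendsto _).comp hZ).pow 2
    have hn2 : Tendsto piN atTop (nhds (‖Z‖^2)) := hn1.congr fun n => hnormsq n
    exact tendsto_nhds_unique hn2 hπ
  have hZint : ∫ ω, (Z ω)^2 ∂μ = (riemannZeta 2 / riemannZeta 3).re := by
    rw [← hZnorm, ← real_inner_self_eq_norm_sq, MeasureTheory.L2.inner_def]
    refine integral_congr_ae (Eventually.of_forall fun a => ?_)
    simp [RCLike.inner_apply]
  -- almost sure convergence along a subsequence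
  have hmeasconv : TendstoInMeasure μ (fun n => ⇑(η n)) atTop ⇑Z :=
    tendstoInMeasure_of_tendsto_Lp hZ
  obtain ⟨ns, hns_mono, hns_ae⟩ := hmeasconv.exists_seq_tendsto_ae
  have hη_ae : ∀ᵐ ω ∂μ, ∀ n : ℕ, η n ω = Y n ω := by
    refine ae_all_iff.2 fun n => ?_
    rw [hηdef]
    exact MemLp.coeFn_toLp (hYmem n)
  have hfinal : (fun ω => (L ω)^(-2:ℤ)) =ᵐ[μ] fun ω => (Z ω)^2 := by
    filter_upwards [hns_ae, hη_ae, haeAll, hlim] with ω hZω hηY hXω hLω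
    have hgne : ∀ p : {p : ℕ // p.Prime}, (1 - X p ω / ((p:ℕ):ℝ)) ≠ 0 := by
      intro p
      have h2 := hq2 p
      have hp0 := hqpos p
      have hd2 : 1/((p:ℕ):ℝ) ≤ 1/2 := one_div_le_one_div_of_le two_pos h2
      rcases hXω p with h | h | h <;> rw [h]
      · intro hcon; linarith [hcon]
      · norm_num
      · have h1q : (0:ℝ) < 1/((p:ℕ):ℝ) := by positivity
        intro hcon
        rw [neg_div] at hcon
        linarith [hcon]
    have hstep : ∀ n : ℕ, Y n ω * (∏ p ∈ Finset.range n,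
        if hp : p.Prime then (1 - X ⟨p, hp⟩ ω / (p:ℝ))⁻¹ else 1) = 1 := by
      intro n
      simp only [hYdef]
      rw [← Finset.prod_mul_distrib]
      apply Finset.prod_eq_one
      intro p hp
      by_cases h : p.Prime
      · rw [dif_pos h, dif_pos h]
        exact mul_inv_cancel₀ (hgne ⟨p, h⟩)
      · rw [dif_neg h, dif_neg h]; norm_num
    have hYlim : Tendsto (fun i => Y (ns i) ω) atTop (nhds (Z ω)) :=
      hZω.congr fun i => hηY (ns i)
    have hPlim : Tendsto (fun i => ∏ p ∈ Finset.range (ns i),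
        if hp : p.Prime then (1 - X ⟨p, hp⟩ ω / (p:ℝ))⁻¹ else 1) atTop (nhds (L ω)) :=
      hLω.comp hns_mono.tendsto_atTop
    have hmullim : Tendsto (fun i => Y (ns i) ω * (∏ p ∈ Finset.range (ns i),
        if hp : p.Prime then (1 - X ⟨p, hp⟩ ω / (p:ℝ))⁻¹ else 1)) atTop
        (nhds (Z ω * L ω)) := hYlim.mul hPlim
    have hconst : Tendsto (fun _ : ℕ => (1:ℝ)) atTop (nhds (Z ω * L ω)) :=
      hmullim.congr fun i => hstep (ns i)
    have hZL : Z ω * L ω = 1 := tendsto_nhds_unique hconst tendsto_const_nhds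
    have hZeq : Z ω = (L ω)⁻¹ := eq_inv_of_mul_eq_one_left hZL
    rw [hZeq, zpow_neg, zpow_two, pow_two, mul_inv]
  have hLint : ∫ ω, (L ω)^(-2:ℤ) ∂μ = (riemannZeta 2 / riemannZeta 3).re := by
    rw [integral_congr_ae hfinal]
    exact hZint
  rw [hLint, hrC]
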